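/- Let H be a real Hilbert space, ι a countable index set, (x_s)_{s∈ι} a pairwise orthogonal family in H with Σ_s ‖x_s‖² < ∞, and let u := Σ_s x_s (the sum converging unconditionally in H). Let (σ_s)_{s∈ι} be positive reals, (p_s)_{s∈ι} reals with p_s ≥ 1, let 0 < q < 2 and M > 0 be such that Σ_s (σ_s ‖x_s‖)² ≤ M and Σ_s p_s² σ_s^{-q} ≤ M. Let (y_s)_{s∈ι} be any family in H with ‖y_s‖ ≤ p_s ‖x_s‖ for all s. Then for every ξ ≥ 1, the series Σ_{s : σ_s^q > ξ} y_s converges absolutely, and the element v := Σ_{s : σ_s^q ≤ ξ} x_s + Σ_{s : σ_s^q > ξ} y_s satisfies ‖u - v‖ ≤ M^{1/2} ξ^{-1/q} + M ξ^{-(1/q - 1/2)}, hence ‖u - v‖ ≤ (M^{1/2} + M) ξ^{-(1/q - 1/2)}. -/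

import Mathlib

open scoped RealInnerProductSpace

/-- Abstract error bound for sparse-grid interpolation of an orthogonal expansion:
`u = Σ_s x_s` with `(x_s)` pairwise orthogonal; on the index set `{σ_s^q ≤ ξ}` the terms
are reproduced exactly, and each remaining term is replaced by `y_s` with
`‖y_s‖ ≤ p_s ‖x_s‖`. The resulting element `v` satisfies
`‖u - v‖ ≤ M^{1/2} ξ^{-1/q} + M ξ^{-(1/q-1/2)} ≤ (M^{1/2}+M) ξ^{-(1/q-1/2)}`. -/
theorem interpolation_error_bound
    {H : Type*} [NormedAddCommGroup H] [InnerProductSpace ℝ H] [CompleteSpace H]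
    {ι : Type*} [Countable ι] (x : ι → H) (u : H)
    (horth : Pairwise fun s t => ⟪x s, x t⟫ = (0 : ℝ))
    (hx2 : Summable fun s => ‖x s‖ ^ 2)
    (hu : HasSum x u)
    (σ : ι → ℝ) (hσ : ∀ s, 0 < σ s) (p : ι → ℝ) (hp : ∀ s, 1 ≤ p s)
    (q M : ℝ) (hq0 : 0 < q) (hq2 : q < 2) (hM : 0 < M)
    (h1 : Summable fun s => (σ s * ‖x s‖) ^ 2)
    (h1' : ∑' s, (σ s * ‖x s‖) ^ 2 ≤ M)
    (h2 : Summable fun s => p s ^ 2 * σ s ^ (-q))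
    (h2' : ∑' s, p s ^ 2 * σ s ^ (-q) ≤ M)
    (y : ι → H) (hy : ∀ s, ‖y s‖ ≤ p s * ‖x s‖) :
    ∀ ξ : ℝ, 1 ≤ ξ →
      Summable (fun s : {s : ι // ξ < σ s ^ q} => ‖y s.1‖) ∧
      ‖u - ((∑' s : {s : ι // σ s ^ q ≤ ξ}, x s.1) +
            ∑' s : {s : ι // ξ < σ s ^ q}, y s.1)‖ ≤
        M ^ ((1 : ℝ) / 2) * ξ ^ (-(1 / q)) + M * ξ ^ (-(1 / q - 1 / 2)) ∧
      ‖u - ((∑' s : {s : ι // σ s ^ q ≤ ξ}, x s.1) +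
            ∑' s : {s : ι // ξ < σ s ^ q}, y s.1)‖ ≤
        (M ^ ((1 : ℝ) / 2) + M) * ξ ^ (-(1 / q - 1 / 2)) := by
  intro ξ hξ
  have hξ0 : (0:ℝ) < ξ := lt_of_lt_of_le one_pos hξ
  have hqne : q ≠ 0 := hq0.ne'
  -- finset sums over the subtype are bounded by tsums over ι
  have key : ∀ (F : Finset {s : ι // ξ < σ s ^ q}) (f : ι → ℝ),
      (∀ i, 0 ≤ f i) → Summable f → ∑ s ∈ F, f s.1 ≤ ∑' i, f i := by
    intro F f hf hsf
    calc ∑ s ∈ F, f s.1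
        = ∑ i ∈ F.map (Function.Embedding.subtype _), f i :=
          (Finset.sum_map F (Function.Embedding.subtype _) f).symm
      _ ≤ ∑' i, f i := Summable.sum_le_tsum _ (fun i _ => hf i) hsf
  -- pointwise bound (1): on the tail, ‖x s‖² ≤ ξ^(-(2/q)) (σ s ‖x s‖)²
  have fact1 : ∀ s : {s : ι // ξ < σ s ^ q},
      ‖x s.1‖ ^ 2 ≤ ξ ^ (-(2/q)) * (σ s.1 * ‖x s.1‖) ^ 2 := by
    rintro ⟨s, hs⟩
    have hb : ξ ^ ((2:ℝ)/q) ≤ σ s ^ 2 := by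
      have h := Real.rpow_le_rpow hξ0.le (le_of_lt hs) (by positivity : (0:ℝ) ≤ 2/q)
      rwa [← Real.rpow_mul (hσ s).le, show q * (2/q) = (2:ℝ) by field_simp,
        show σ s ^ (2:ℝ) = σ s ^ (2:ℕ) by rw [← Real.rpow_natCast (σ s) 2]; norm_num] at h
    have hξq : (0:ℝ) < ξ ^ ((2:ℝ)/q) := Real.rpow_pos_of_pos hξ0 _
    rw [Real.rpow_neg hξ0.le, mul_pow, inv_mul_eq_div, le_div_iff₀ hξq]
    nlinarith [mul_le_mul_of_nonneg_left hb (sq_nonneg ‖x s‖)]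
  -- pointwise bound (2): on the tail, σ^q ‖x‖² ≤ ξ^((q-2)/q) (σ‖x‖)²
  have fact2 : ∀ s : {s : ι // ξ < σ s ^ q},
      σ s.1 ^ q * ‖x s.1‖ ^ 2 ≤ ξ ^ ((q-2)/q) * (σ s.1 * ‖x s.1‖) ^ 2 := by
    rintro ⟨s, hs⟩
    have ha : σ s ^ (q - 2 : ℝ) ≤ ξ ^ ((q-2)/q) := by
      have h := Real.rpow_le_rpow_of_nonpos hξ0 (le_of_lt hs)
        (div_nonpos_of_nonpos_of_nonneg (show q - 2 ≤ 0 by linarith) hq0.le)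
      rwa [← Real.rpow_mul (hσ s).le, show q * ((q-2)/q) = (q-2 : ℝ) by field_simp] at h
    have hid : σ s ^ q * ‖x s‖ ^ 2 = σ s ^ (q - 2 : ℝ) * (σ s * ‖x s‖) ^ 2 := by
      have h2 : σ s ^ (q-2:ℝ) * σ s ^ (2:ℕ) = σ s ^ q := by
        rw [← Real.rpow_natCast (σ s) 2, ← Real.rpow_add (hσ s)]; norm_num
      rw [mul_pow, ← h2]; ring
    rw [hid]
    exact mul_le_mul_of_nonneg_right ha (sq_nonneg _)
  -- Cauchy–Schwarz bound on finite partial sums of ‖y‖ over the tail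
  have hCS : ∀ F : Finset {s : ι // ξ < σ s ^ q},
      ∑ s ∈ F, ‖y s.1‖ ≤ M * ξ ^ (-(1/q - 1/2)) := by
    intro F
    set f : {s : ι // ξ < σ s ^ q} → ℝ := fun s => p s.1 * σ s.1 ^ (-(q/2)) with hf
    set g : {s : ι // ξ < σ s ^ q} → ℝ := fun s => σ s.1 ^ (q/2) * ‖x s.1‖ with hg
    have hfg : ∀ s : {s : ι // ξ < σ s ^ q}, ‖y s.1‖ ≤ f s * g s := by
      intro s
      have h1 : σ s.1 ^ (-(q/2):ℝ) * σ s.1 ^ (q/2:ℝ) = 1 := by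
        rw [← Real.rpow_add (hσ s.1), neg_add_cancel, Real.rpow_zero]
      have he : f s * g s = p s.1 * ‖x s.1‖ := by
        simp only [hf, hg]
        calc p s.1 * σ s.1 ^ (-(q/2):ℝ) * (σ s.1 ^ (q/2:ℝ) * ‖x s.1‖)
            = p s.1 * ‖x s.1‖ * (σ s.1 ^ (-(q/2):ℝ) * σ s.1 ^ (q/2:ℝ)) := by ring
          _ = p s.1 * ‖x s.1‖ := by rw [h1, mul_one]
      rw [he]; exact hy s.1
    have hfsq : ∀ s : {s : ι // ξ < σ s ^ q}, f s ^ 2 = p s.1 ^ 2 * σ s.1 ^ (-q) := by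
      intro s
      have h2 : (σ s.1 ^ (-(q/2):ℝ)) ^ (2:ℕ) = σ s.1 ^ (-q) := by
        rw [← Real.rpow_natCast (σ s.1 ^ (-(q/2):ℝ)) 2, ← Real.rpow_mul (hσ s.1).le]
        congr 1; push_cast; ring
      simp only [hf, mul_pow, h2]
    have hgsq : ∀ s : {s : ι // ξ < σ s ^ q}, g s ^ 2 = σ s.1 ^ q * ‖x s.1‖ ^ 2 := by
      intro s
      have h2 : (σ s.1 ^ (q/2:ℝ)) ^ (2:ℕ) = σ s.1 ^ q := by
        rw [← Real.rpow_natCast (σ s.1 ^ (q/2:ℝ)) 2, ← Real.rpow_mul (hσ s.1).le]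
        congr 1; push_cast; ring
      simp only [hg, mul_pow, h2]
    have hFf : ∑ s ∈ F, f s ^ 2 ≤ M := by
      calc ∑ s ∈ F, f s ^ 2 = ∑ s ∈ F, (fun i => p i ^ 2 * σ i ^ (-q)) s.1 :=
            Finset.sum_congr rfl fun s _ => hfsq s
        _ ≤ ∑' i, p i ^ 2 * σ i ^ (-q) :=
            key F _ (fun i => mul_nonneg (sq_nonneg _) (Real.rpow_nonneg (hσ i).le _)) h2
        _ ≤ M := h2'
    have hFg : ∑ s ∈ F, g s ^ 2 ≤ ξ ^ ((q-2)/q) * M := by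
      calc ∑ s ∈ F, g s ^ 2 = ∑ s ∈ F, σ s.1 ^ q * ‖x s.1‖ ^ 2 :=
            Finset.sum_congr rfl fun s _ => hgsq s
        _ ≤ ∑ s ∈ F, ξ ^ ((q-2)/q) * (σ s.1 * ‖x s.1‖) ^ 2 :=
            Finset.sum_le_sum fun s _ => fact2 s
        _ = ξ ^ ((q-2)/q) * ∑ s ∈ F, (fun i => (σ i * ‖x i‖) ^ 2) s.1 := by
            rw [Finset.mul_sum]
        _ ≤ ξ ^ ((q-2)/q) * M :=
            mul_le_mul_of_nonneg_left
              ((key F _ (fun i => sq_nonneg _) h1).trans h1')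
              (Real.rpow_nonneg hξ0.le _)
    have hsqrt : √(ξ ^ ((q-2)/q)) = ξ ^ (-(1/q - 1/2)) := by
      rw [Real.sqrt_eq_rpow, ← Real.rpow_mul hξ0.le]
      congr 1; field_simp; ring
    calc ∑ s ∈ F, ‖y s.1‖
        ≤ ∑ s ∈ F, f s * g s := Finset.sum_le_sum fun s _ => hfg s
      _ ≤ √(∑ s ∈ F, f s ^ 2) * √(∑ s ∈ F, g s ^ 2) := Real.sum_mul_le_sqrt_mul_sqrt F f g
      _ ≤ √M * √(ξ ^ ((q-2)/q) * M) :=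
          mul_le_mul (Real.sqrt_le_sqrt hFf) (Real.sqrt_le_sqrt hFg)
            (Real.sqrt_nonneg _) (Real.sqrt_nonneg _)
      _ = M * ξ ^ (-(1/q - 1/2)) := by
          rw [Real.sqrt_mul (Real.rpow_nonneg hξ0.le _) M, hsqrt]
          rw [show √M * (ξ ^ (-(1/q - 1/2)) * √M) = (√M * √M) * ξ ^ (-(1/q - 1/2)) by ring,
            Real.mul_self_sqrt hM.le]
  have hsy : Summable (fun s : {s : ι // ξ < σ s ^ q} => ‖y s.1‖) :=
    summable_of_sum_le (fun s => norm_nonneg _) hCS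
  have hty : ∑' s : {s : ι // ξ < σ s ^ q}, ‖y s.1‖ ≤ M * ξ ^ (-(1/q - 1/2)) :=
    Summable.tsum_le_of_sum_le hsy hCS
  -- the x-tail
  have hxS : Summable (fun s : {s : ι // ξ < σ s ^ q} => x s.1) :=
    hu.summable.subtype {s : ι | ξ < σ s ^ q}
  have pyth : ∀ F : Finset {s : ι // ξ < σ s ^ q},
      ‖∑ s ∈ F, x s.1‖ ^ 2 = ∑ s ∈ F, ‖x s.1‖ ^ 2 := by
    intro F
    rw [← real_inner_self_eq_norm_sq, sum_inner]
    refine Finset.sum_congr rfl fun i hi => ?_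
    rw [inner_sum, Finset.sum_eq_single_of_mem i hi
      (fun j _ hne => horth fun h => hne (Subtype.ext h.symm))]
    exact real_inner_self_eq_norm_sq _
  have hnormF : ∀ F : Finset {s : ι // ξ < σ s ^ q},
      ‖∑ s ∈ F, x s.1‖ ≤ M ^ ((1 : ℝ) / 2) * ξ ^ (-(1 / q)) := by
    intro F
    have hb : ‖∑ s ∈ F, x s.1‖ ^ 2 ≤ ξ ^ (-(2/q)) * M := by
      rw [pyth F]
      calc ∑ s ∈ F, ‖x s.1‖ ^ 2
          ≤ ∑ s ∈ F, ξ ^ (-(2/q)) * (σ s.1 * ‖x s.1‖) ^ 2 :=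
            Finset.sum_le_sum fun s _ => fact1 s
        _ = ξ ^ (-(2/q)) * ∑ s ∈ F, (fun i => (σ i * ‖x i‖) ^ 2) s.1 := by
            rw [Finset.mul_sum]
        _ ≤ ξ ^ (-(2/q)) * M :=
            mul_le_mul_of_nonneg_left
              ((key F _ (fun i => sq_nonneg _) h1).trans h1')
              (Real.rpow_nonneg hξ0.le _)
    have hle := (Real.le_sqrt (norm_nonneg _)
      (mul_nonneg (Real.rpow_nonneg hξ0.le _) hM.le)).mpr hb
    have hsqrt : √(ξ ^ (-(2/q)) * M) = M ^ ((1 : ℝ) / 2) * ξ ^ (-(1 / q)) := by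
      rw [Real.sqrt_mul (Real.rpow_nonneg hξ0.le _) M, Real.sqrt_eq_rpow (ξ ^ (-(2/q))),
        ← Real.rpow_mul hξ0.le, Real.sqrt_eq_rpow M,
        show -(2/q) * (1/2) = -(1/q) by ring, mul_comm]
    rw [hsqrt] at hle
    exact hle
  have hxtail : ‖∑' s : {s : ι // ξ < σ s ^ q}, x s.1‖ ≤ M ^ ((1 : ℝ) / 2) * ξ ^ (-(1 / q)) := by
    have hts : Filter.Tendsto (fun F : Finset {s : ι // ξ < σ s ^ q} => ∑ s ∈ F, x s.1)
        Filter.atTop (nhds (∑' s : {s : ι // ξ < σ s ^ q}, x s.1)) := hxS.hasSum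
    exact le_of_tendsto hts.norm (Filter.Eventually.of_forall hnormF)
  -- splitting of u
  have hsplit : (∑' s : {s : ι // σ s ^ q ≤ ξ}, x s.1) +
      (∑' s : {s : ι // ξ < σ s ^ q}, x s.1) = u := by
    have h := Summable.tsum_subtype_add_tsum_subtype_compl hu.summable {s : ι | σ s ^ q ≤ ξ}
    rw [hu.tsum_eq] at h
    have hc : (∑' s : ↥({s : ι | σ s ^ q ≤ ξ}ᶜ), x s.1) =
        ∑' s : ↥{s : ι | ξ < σ s ^ q}, x s.1 :=
      tsum_congr_set_coe x (by ext s; simp [not_le])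
    rw [hc] at h
    exact h
  have hdiff : u - ((∑' s : {s : ι // σ s ^ q ≤ ξ}, x s.1) +
      ∑' s : {s : ι // ξ < σ s ^ q}, y s.1) =
      (∑' s : {s : ι // ξ < σ s ^ q}, x s.1) - ∑' s : {s : ι // ξ < σ s ^ q}, y s.1 := by
    rw [← hsplit]; abel
  have hb1 : ‖u - ((∑' s : {s : ι // σ s ^ q ≤ ξ}, x s.1) +
      ∑' s : {s : ι // ξ < σ s ^ q}, y s.1)‖ ≤
      M ^ ((1 : ℝ) / 2) * ξ ^ (-(1 / q)) + M * ξ ^ (-(1 / q - 1 / 2)) := by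
    rw [hdiff]
    calc ‖(∑' s : {s : ι // ξ < σ s ^ q}, x s.1) - ∑' s : {s : ι // ξ < σ s ^ q}, y s.1‖
        ≤ ‖∑' s : {s : ι // ξ < σ s ^ q}, x s.1‖ +
          ‖∑' s : {s : ι // ξ < σ s ^ q}, y s.1‖ := norm_sub_le _ _
      _ ≤ M ^ ((1 : ℝ) / 2) * ξ ^ (-(1 / q)) + M * ξ ^ (-(1 / q - 1 / 2)) :=
          add_le_add hxtail
            ((norm_tsum_le_tsum_norm (f := fun s : {s : ι // ξ < σ s ^ q} => y s.1) hsy).trans hty)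
  refine ⟨hsy, hb1, ?_⟩
  have hexp : ξ ^ (-(1 / q)) ≤ ξ ^ (-(1 / q - 1 / 2)) :=
    Real.rpow_le_rpow_of_exponent_le hξ (by linarith)
  calc ‖u - ((∑' s : {s : ι // σ s ^ q ≤ ξ}, x s.1) +
      ∑' s : {s : ι // ξ < σ s ^ q}, y s.1)‖
      ≤ M ^ ((1 : ℝ) / 2) * ξ ^ (-(1 / q)) + M * ξ ^ (-(1 / q - 1 / 2)) := hb1
    _ ≤ M ^ ((1 : ℝ) / 2) * ξ ^ (-(1 / q - 1 / 2)) + M * ξ ^ (-(1 / q - 1 / 2)) :=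
        add_le_add_left (mul_le_mul_of_nonneg_left hexp (Real.rpow_nonneg hM.le _)) _
    _ = (M ^ ((1 : ℝ) / 2) + M) * ξ ^ (-(1 / q - 1 / 2)) := by ring
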